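/- Let d ≥ 8, let v ∈ ℝ^d be nonzero, let Q : ℝ^d → ℝ^d be the orthogonal projection onto the hyperplane {z ∈ ℝ^d : ⟪z, v⟫ = 0}, i.e. Q n = n − (⟪v, n⟫/‖v‖²)·v, and let w ∈ ℝ^d be a unit vector with ⟪w, v⟫ = 0. Then ∫ arcsin( |⟪Q n, w⟫| / ‖Q n‖ ) dγ(n) ≤ arccos(√(1 − 1/(d−1))), where the integrand is interpreted as 0 when Q n = 0 (a γ-null set). -/

import Mathlib

set_option maxHeartbeats 1000000

open MeasureTheory ProbabilityTheory
open scoped RealInnerProductSpace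

/-- The standard Gaussian measure `N(0, I)` on `ℝ^d`. -/
noncomputable def stdGaussian (d : ℕ) : Measure (EuclideanSpace ℝ (Fin d)) :=
  Measure.map (MeasurableEquiv.toLp 2 (Fin d → ℝ))
    (Measure.pi fun _ : Fin d => gaussianReal 0 1)

section Aux

open Real
open scoped ENNReal

instance gaussianReal_noAtoms' : NullSingletonClass (gaussianReal 0 1) := by
  constructor
  intro x
  exact gaussianReal_absolutelyContinuous 0 one_ne_zero (measure_singleton x)


open Real

lemma endpoint_B {m : ℝ} (hm0 : 0 < m) (hm7 : m ≤ 1/7) :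
    π / 2 ≤ Real.arcsin (Real.sqrt m) + (1 - m) * (2 * Real.sqrt (m * (1-m)))⁻¹ := by
  have hm1 : m < 1 := by linarith
  set s := Real.sqrt m with hs
  have hs0 : 0 < s := Real.sqrt_pos.mpr hm0
  have hs2 : s^2 = m := Real.sq_sqrt hm0.le
  set t := Real.sqrt (1 - m) with ht
  have ht0 : 0 < t := Real.sqrt_pos.mpr (by linarith)
  have ht2 : t^2 = 1 - m := Real.sq_sqrt (by linarith)
  have hmul : Real.sqrt (m * (1-m)) = s * t := Real.sqrt_mul hm0.le _
  have hs1 : s ≤ 1 := by nlinarith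
  have hpi : (3 : ℝ) < π := by linarith [Real.pi_gt_three]
  have ha1 : s ≤ Real.arcsin s := by
    have h1 : Real.arcsin (Real.sin s) = s := Real.arcsin_sin (by linarith) (by linarith)
    calc s = Real.arcsin (Real.sin s) := h1.symm
    _ ≤ Real.arcsin s := Real.monotone_arcsin (Real.sin_le hs0.le)
  have key : (1 - m) * (2 * (s*t))⁻¹ = t / (2*s) := by
    rw [← ht2]; field_simp
  rw [hmul, key]
  have hq : 1 - m/2 - m^2/2 ≤ t := by nlinarith
  have hpilt : π < 3.15 := Real.pi_lt_d2
  have hr : (1 - m/2 - m^2/2) / (2*s) * (2*s) = 1 - m/2 - m^2/2 :=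
    div_mul_cancel₀ _ (by positivity)
  have poly : π * s ≤ 2*s^2 + (1 - m/2 - m^2/2) := by
    have h1 : π * s < 3.15 * s := mul_lt_mul_of_pos_right hpilt hs0
    have h2 : s^2 ≤ 1/7 := by rw [hs2]; exact hm7
    nlinarith [sq_nonneg (s - 378/1000), sq_nonneg (s^2 - 1/7), sq_nonneg s, hs2]
  have main : π / 2 ≤ s + (1 - m/2 - m^2/2) / (2*s) := by
    nlinarith [hr, poly, hs0]
  have h3 : (1 - m/2 - m^2/2) / (2*s) ≤ t / (2*s) := by gcongr
  linarith
lemma arcsin_le_support_line {m x : ℝ} (hm0 : 0 < m) (hm7 : m ≤ 1/7)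
    (hx0 : 0 ≤ x) (hx1 : x ≤ 1) :
    Real.arcsin x ≤ Real.arcsin (Real.sqrt m)
      + (x^2 - m) * (2 * Real.sqrt (m * (1-m)))⁻¹ := by
  have hm1 : m < 1 := by linarith
  set c : ℝ := (2 * Real.sqrt (m * (1-m)))⁻¹ with hc
  set sm := Real.sqrt m with hsm
  have hsm0 : 0 < sm := Real.sqrt_pos.mpr hm0
  have hsm2 : sm^2 = m := Real.sq_sqrt hm0.le
  have hsm1 : sm < 1 := by nlinarith
  set s1 := Real.sqrt (1-m) with hs1
  have hs10 : 0 < s1 := Real.sqrt_pos.mpr (by linarith)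
  have hs12 : s1^2 = 1 - m := Real.sq_sqrt (by linarith)
  have hs11 : s1 < 1 := by nlinarith
  have hsms1 : sm ≤ s1 := by nlinarith
  set q := Real.sqrt (m * (1-m)) with hq
  have hq0 : 0 < q := Real.sqrt_pos.mpr (by nlinarith)
  have hq2 : q^2 = m * (1-m) := Real.sq_sqrt (by nlinarith)
  have hc0 : 0 < c := by positivity
  set h : ℝ → ℝ := fun y => Real.arcsin sm + (y^2 - m) * c - Real.arcsin y with hh
  -- `h sm = 0`
  have hhsm : h sm = 0 := by simp [hh, hsm2]
  -- derivative of h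
  have hderiv : ∀ y : ℝ, -1 < y → y < 1 →
      HasDerivAt h (2*y*c - 1 / Real.sqrt (1 - y^2)) y := by
    intro y hy1 hy2
    have h1 : HasDerivAt (fun z : ℝ => Real.arcsin sm + (z^2 - m) * c) (2*y*c) y := by
      have := (((hasDerivAt_pow 2 y).sub_const m).mul_const c).const_add (Real.arcsin sm)
      simpa using this
    exact h1.sub (Real.hasDerivAt_arcsin (by linarith) (by linarith))
  have hcont : Continuous h := by
    apply Continuous.sub
    · exact continuous_const.add (((continuous_pow 2).sub continuous_const).mul continuous_const)
    · exact Real.continuous_arcsin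
  -- sign of derivative: comparison with q
  have hsign : ∀ y : ℝ, 0 < y → y < 1 →
      (2*y*c - 1 / Real.sqrt (1 - y^2) ≤ 0 ↔ y * Real.sqrt (1 - y^2) ≤ q) := by
    intro y hy0 hy1
    have hu0 : 0 < Real.sqrt (1 - y^2) := Real.sqrt_pos.mpr (by nlinarith)
    have h2c : 2 * y * c = y / q := by rw [hc]; field_simp
    rw [h2c, sub_nonpos, div_le_div_iff₀ hq0 hu0, one_mul]
  clear_value c sm s1 q h
  -- Interval 1 : antitone on [0, sm]
  have hI1 : AntitoneOn h (Set.Icc 0 sm) := by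
    apply antitoneOn_of_deriv_nonpos (convex_Icc _ _) hcont.continuousOn
    · intro y hy
      rw [interior_Icc] at hy
      exact (hderiv y (by linarith [hy.1]) (by linarith [hy.2])).differentiableAt.differentiableWithinAt
    · intro y hy
      rw [interior_Icc] at hy
      obtain ⟨hy0, hy2⟩ := hy
      have hylt1 : y < 1 := by linarith
      rw [(hderiv y (by linarith) hylt1).deriv, hsign y hy0 hylt1]
      have hu2 : (Real.sqrt (1 - y^2))^2 = 1 - y^2 := Real.sq_sqrt (by nlinarith)
      have hu0 : 0 ≤ Real.sqrt (1 - y^2) := Real.sqrt_nonneg _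
      have hyy : y^2 ≤ m := by nlinarith
      apply le_of_pow_le_pow_left₀ two_ne_zero hq0.le
      rw [mul_pow, hu2, hq2]
      nlinarith [mul_nonneg (by linarith : (0:ℝ) ≤ m - y^2) (by linarith : (0:ℝ) ≤ 1 - y^2 - m)]
  -- Interval 2 : monotone on [sm, s1]
  have hI2 : MonotoneOn h (Set.Icc sm s1) := by
    apply monotoneOn_of_deriv_nonneg (convex_Icc _ _) hcont.continuousOn
    · intro y hy
      rw [interior_Icc] at hy
      exact (hderiv y (by linarith [hy.1]) (by linarith [hy.2])).differentiableAt.differentiableWithinAt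
    · intro y hy
      rw [interior_Icc] at hy
      obtain ⟨hy0', hy2⟩ := hy
      have hy0 : 0 < y := lt_trans hsm0 hy0'
      have hylt1 : y < 1 := by linarith
      rw [(hderiv y (by linarith) hylt1).deriv, ← neg_nonpos, neg_sub, sub_nonpos]
      have hgoal : q ≤ y * Real.sqrt (1 - y^2) := by
        have hu2 : (Real.sqrt (1 - y^2))^2 = 1 - y^2 := Real.sq_sqrt (by nlinarith)
        have hu0 : 0 ≤ Real.sqrt (1 - y^2) := Real.sqrt_nonneg _
        have hyy1 : m ≤ y^2 := by nlinarith
        have hyy2 : y^2 ≤ 1 - m := by nlinarith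
        apply le_of_pow_le_pow_left₀ two_ne_zero (mul_nonneg hy0.le hu0)
        rw [mul_pow, hu2, hq2]
        nlinarith [mul_nonneg (by linarith : (0:ℝ) ≤ y^2 - m) (by linarith : (0:ℝ) ≤ 1 - y^2 - m)]
      have := (hsign y hy0 hylt1)
      -- from ¬(≤) direction: we need 1/√(1-y²) ≤ 2yc
      have h2c : 2 * y * c = y / q := by rw [hc]; field_simp
      have hu0 : 0 < Real.sqrt (1 - y^2) := Real.sqrt_pos.mpr (by nlinarith)
      rw [h2c, div_le_div_iff₀ hu0 hq0, one_mul]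
      linarith [hgoal]
  -- Interval 3 : antitone on [s1, 1]
  have hI3 : AntitoneOn h (Set.Icc s1 1) := by
    apply antitoneOn_of_deriv_nonpos (convex_Icc _ _) hcont.continuousOn
    · intro y hy
      rw [interior_Icc] at hy
      exact (hderiv y (by linarith [lt_trans hs10 hy.1]) hy.2).differentiableAt.differentiableWithinAt
    · intro y hy
      rw [interior_Icc] at hy
      obtain ⟨hy0', hy2⟩ := hy
      have hy0 : 0 < y := lt_trans hs10 hy0'
      rw [(hderiv y (by linarith) hy2).deriv, hsign y hy0 hy2]
      have hu2 : (Real.sqrt (1 - y^2))^2 = 1 - y^2 := Real.sq_sqrt (by nlinarith)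
      have hu0 : 0 ≤ Real.sqrt (1 - y^2) := Real.sqrt_nonneg _
      have hyy : 1 - m ≤ y^2 := by nlinarith
      apply le_of_pow_le_pow_left₀ two_ne_zero hq0.le
      rw [mul_pow, hu2, hq2]
      nlinarith [mul_nonneg (by linarith : (0:ℝ) ≤ y^2 - m) (by linarith : (0:ℝ) ≤ y^2 + m - 1)]
  -- endpoint value
  have hend : 0 ≤ h 1 := by
    have h1v : h 1 = Real.arcsin sm + (1 - m) * c - π / 2 := by
      simp [hh, Real.arcsin_one]
    rw [h1v, hsm, hc, hq]
    linarith [endpoint_B hm0 hm7]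
  -- combine
  have hfinal : 0 ≤ h x := by
    rcases le_total x sm with hcase | hcase
    · have := hI1 (Set.mem_Icc.mpr ⟨hx0, hcase⟩) (Set.mem_Icc.mpr ⟨hsm0.le, le_refl sm⟩) hcase
      linarith [this, hhsm]
    · rcases le_total x s1 with hcase2 | hcase2
      · have := hI2 (Set.mem_Icc.mpr ⟨le_refl sm, hsms1⟩) (Set.mem_Icc.mpr ⟨hcase, hcase2⟩) hcase
        linarith [this, hhsm]
      · have := hI3 (Set.mem_Icc.mpr ⟨hcase2, hx1⟩) (Set.mem_Icc.mpr ⟨hs11.le, le_refl 1⟩) hx1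
        linarith [this, hend]
  simp only [hh] at hfinal
  linarith [hfinal]



lemma lintegral_pi_prod : ∀ {n : ℕ} (μ : Fin n → Measure ℝ), (∀ i, SigmaFinite (μ i)) →
    ∀ (g : Fin n → ℝ → ℝ≥0∞), (∀ i, Measurable (g i)) →
    ∫⁻ x, ∏ i, g i (x i) ∂Measure.pi μ = ∏ i, ∫⁻ t, g i t ∂μ i := by
  intro n
  induction n with
  | zero =>
    intro μ _ g _
    rw [Measure.pi_of_empty μ]
    simp
  | succ n ih =>
    intro μ hσ g hg
    have hmp := measurePreserving_piFinSuccAbove μ 0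
    have hF : Measurable (fun p : ℝ × (Fin n → ℝ) => g 0 p.1 * ∏ j, g (Fin.succ j) (p.2 j)) := by
      apply Measurable.mul
      · exact (hg 0).comp measurable_fst
      · exact Finset.measurable_prod _ fun j _ => (hg _).comp ((measurable_pi_apply j).comp measurable_snd)
    have key := hmp.lintegral_comp hF
    have heq : ∀ x : Fin (n+1) → ℝ,
        (fun p : ℝ × (Fin n → ℝ) => g 0 p.1 * ∏ j, g (Fin.succ j) (p.2 j))
          ((MeasurableEquiv.piFinSuccAbove (fun _ => ℝ) 0) x) = ∏ i, g i (x i) := by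
      intro x
      rw [Fin.prod_univ_succ]
      simp [MeasurableEquiv.piFinSuccAbove, Fin.succAbove_zero, Fin.tail]
    have key2 : ∫⁻ x, ∏ i, g i (x i) ∂Measure.pi μ
        = ∫⁻ b : ℝ × (Fin n → ℝ), g 0 b.1 * ∏ j, g (Fin.succ j) (b.2 j)
            ∂((μ 0).prod (Measure.pi fun j => μ (Fin.succAbove 0 j))) := by
      rw [← key]; exact lintegral_congr fun x => (heq x).symm
    rw [key2, lintegral_prod_mul (f := g 0) (g := fun y : Fin n → ℝ => ∏ j, g (Fin.succ j) (y j))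
      ((hg 0).aemeasurable)
      ((Finset.measurable_prod _ fun j _ => (hg _).comp (measurable_pi_apply j)).aemeasurable)]
    have := ih (fun j => μ (Fin.succAbove 0 j)) (fun j => hσ _) (fun j => g (Fin.succ j))
      (fun j => hg _)
    rw [this, Fin.prod_univ_succ]
    simp [Fin.succAbove_zero]

lemma pi_gaussian_withDensity (d : ℕ) :
    (Measure.pi fun _ : Fin d => gaussianReal 0 1) =
      (volume : Measure (Fin d → ℝ)).withDensity
        (fun y => ∏ i, gaussianPDF 0 1 (y i)) := by
  apply Measure.pi_eq
  intro s hs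
  rw [withDensity_apply _ (MeasurableSet.univ_pi hs),
    ← lintegral_indicator (MeasurableSet.univ_pi hs)]
  have hind : ∀ y : Fin d → ℝ, (Set.univ.pi s).indicator
      (fun y => ∏ i, gaussianPDF 0 1 (y i)) y
      = ∏ i, (s i).indicator (gaussianPDF 0 1) (y i) := by
    intro y
    by_cases hy : y ∈ Set.univ.pi s
    · rw [Set.indicator_of_mem hy]
      exact Finset.prod_congr rfl fun i _ =>
        (Set.indicator_of_mem (hy i (Set.mem_univ i)) _).symm
    · rw [Set.indicator_of_notMem hy]
      obtain ⟨i, hi⟩ : ∃ i, y i ∉ s i := by simpa [Set.mem_pi] using hy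
      exact (Finset.prod_eq_zero (Finset.mem_univ i)
        (by simp [Set.indicator_of_notMem hi])).symm
  simp_rw [hind]
  rw [show (volume : Measure (Fin d → ℝ)) = Measure.pi (fun _ => volume) from rfl]
  rw [lintegral_pi_prod _ (fun _ => inferInstance) _
    (fun i => (measurable_gaussianPDF 0 1).indicator (hs i))]
  exact Finset.prod_congr rfl fun i _ => by
    rw [lintegral_indicator (hs i), gaussianReal_apply 0 one_ne_zero]

lemma map_withDensity_equiv {α β : Type*} [MeasurableSpace α] [MeasurableSpace β]
    (T : α ≃ᵐ β) (μ : Measure α) (g : β → ℝ≥0∞) (hg : Measurable g) :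
    Measure.map T (μ.withDensity (fun a => g (T a))) = (Measure.map T μ).withDensity g := by
  ext A hA
  rw [Measure.map_apply T.measurable hA, withDensity_apply _ hA,
    withDensity_apply _ (T.measurable hA), ← lintegral_indicator (T.measurable hA),
    ← lintegral_indicator hA, lintegral_map (hg.indicator hA) T.measurable]
  refine lintegral_congr fun a => ?_
  by_cases h : T a ∈ A
  · rw [Set.indicator_of_mem h, Set.indicator_of_mem (by exact h)]
  · rw [Set.indicator_of_notMem h, Set.indicator_of_notMem (by exact h)]

lemma stdGaussian_eq_withDensity (d : ℕ) :
    stdGaussian d = (volume : Measure (EuclideanSpace ℝ (Fin d))).withDensity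
      (fun x => ENNReal.ofReal ((Real.sqrt (2*π))⁻¹ ^ d * Real.exp (-‖x‖^2/2))) := by
  have hmeas : Measurable (fun x : EuclideanSpace ℝ (Fin d) =>
      ENNReal.ofReal ((Real.sqrt (2*π))⁻¹ ^ d * Real.exp (-‖x‖^2/2))) := by
    apply ENNReal.measurable_ofReal.comp
    exact (measurable_const.mul (((measurable_norm.pow_const 2).neg.div_const 2).exp))
  have hD : ∀ y : Fin d → ℝ, (∏ i, gaussianPDF 0 1 (y i))
      = ENNReal.ofReal ((Real.sqrt (2*π))⁻¹ ^ d
        * Real.exp (-‖(MeasurableEquiv.toLp 2 (Fin d → ℝ)) y‖^2/2)) := by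
    intro y
    have hnorm : ‖(MeasurableEquiv.toLp 2 (Fin d → ℝ)) y‖^2 = ∑ i, (y i)^2 := by
      rw [EuclideanSpace.norm_eq, Real.sq_sqrt (by positivity)]
      simp only [Real.norm_eq_abs, sq_abs]
      exact Finset.sum_congr rfl fun i _ => rfl
    rw [hnorm]
    simp_rw [gaussianPDF]
    rw [← ENNReal.ofReal_prod_of_nonneg (fun i _ => gaussianPDFReal_nonneg 0 1 (y i))]
    congr 1
    have hpdf : ∀ i : Fin d, gaussianPDFReal 0 1 (y i)
        = (Real.sqrt (2*π))⁻¹ * Real.exp (-(y i)^2/2) := by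
      intro i; rw [gaussianPDFReal]; push_cast; norm_num
    simp_rw [hpdf]
    rw [Finset.prod_mul_distrib, Finset.prod_const, Finset.card_univ, Fintype.card_fin,
      ← Real.exp_sum]
    congr 1
    rw [← Finset.sum_div, Finset.sum_neg_distrib]
  rw [_root_.stdGaussian, pi_gaussian_withDensity]
  have h1 : (fun y : Fin d → ℝ => ∏ i, gaussianPDF 0 1 (y i))
      = fun y => (fun x : EuclideanSpace ℝ (Fin d) =>
          ENNReal.ofReal ((Real.sqrt (2*π))⁻¹ ^ d * Real.exp (-‖x‖^2/2)))
        ((MeasurableEquiv.toLp 2 (Fin d → ℝ)) y) := funext hD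
  rw [h1, map_withDensity_equiv _ _ _ hmeas,
    (show Measure.map (MeasurableEquiv.toLp 2 (Fin d → ℝ)) (volume : Measure (Fin d → ℝ)) = volume
      from ((EuclideanSpace.volume_preserving_symm_measurableEquiv_toLp (Fin d)).symm _).map_eq)]

lemma stdGaussian_map_isometry {d : ℕ}
    (L : EuclideanSpace ℝ (Fin d) ≃ₗᵢ[ℝ] EuclideanSpace ℝ (Fin d)) :
    Measure.map L (stdGaussian d) = stdGaussian d := by
  have hmeas : Measurable (fun x : EuclideanSpace ℝ (Fin d) =>
      ENNReal.ofReal ((Real.sqrt (2*π))⁻¹ ^ d * Real.exp (-‖x‖^2/2))) := by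
    apply ENNReal.measurable_ofReal.comp
    exact (measurable_const.mul (((measurable_norm.pow_const 2).neg.div_const 2).exp))
  rw [stdGaussian_eq_withDensity]
  set D : EuclideanSpace ℝ (Fin d) → ℝ≥0∞ :=
    fun x => ENNReal.ofReal ((Real.sqrt (2*π))⁻¹ ^ d * Real.exp (-‖x‖^2/2)) with hDdef
  have hT : (⇑L) = ⇑(L.toHomeomorph.toMeasurableEquiv) := rfl
  have hDL : (fun a => D (L.toHomeomorph.toMeasurableEquiv a)) = D := by
    funext a
    simp only [hDdef]
    rw [show ‖L.toHomeomorph.toMeasurableEquiv a‖ = ‖a‖ from L.norm_map a]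
  calc Measure.map L (volume.withDensity D)
      = Measure.map L.toHomeomorph.toMeasurableEquiv
          (volume.withDensity (fun a => D (L.toHomeomorph.toMeasurableEquiv a))) := by
        rw [hDL, hT]
    _ = (Measure.map L.toHomeomorph.toMeasurableEquiv volume).withDensity D :=
        map_withDensity_equiv _ _ _ hmeas
    _ = volume.withDensity D := by
        rw [show Measure.map L.toHomeomorph.toMeasurableEquiv volume = volume from
          L.measurePreserving.map_eq]

instance gaussianReal_noAtoms : NullSingletonClass (gaussianReal 0 1) := by
  constructor
  intro x
  exact gaussianReal_absolutelyContinuous 0 one_ne_zero (measure_singleton x)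
section PiSide

variable {d : ℕ} [NeZero d]

noncomputable def piG (d : ℕ) : Measure (Fin d → ℝ) :=
  Measure.pi fun _ : Fin d => gaussianReal 0 1

noncomputable def Sfn (d : ℕ) [NeZero d] : (Fin d → ℝ) → ℝ :=
  fun y => (∑ i, (y i)^2) - (y 0)^2

lemma Sfn_nonneg (y : Fin d → ℝ) : 0 ≤ Sfn d y := by
  have : (y 0)^2 ≤ ∑ i, (y i)^2 :=
    Finset.single_le_sum (fun i _ => sq_nonneg (y i)) (Finset.mem_univ 0)
  simpa [Sfn] using this

lemma sq_le_Sfn (hd : 2 ≤ d) {i : Fin d} (hi : i ≠ 0) (y : Fin d → ℝ) :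
    (y i)^2 ≤ Sfn d y := by
  have hsub : ({0, i} : Finset (Fin d)) ⊆ Finset.univ := Finset.subset_univ _
  have h1 : (y 0)^2 + (y i)^2 ≤ ∑ j, (y j)^2 := by
    rw [show (y 0)^2 + (y i)^2 = ∑ j ∈ ({0, i} : Finset (Fin d)), (y j)^2 from
      (Finset.sum_pair (f := fun j => (y j)^2) (Ne.symm hi)).symm]
    exact Finset.sum_le_sum_of_subset_of_nonneg hsub (fun j _ _ => sq_nonneg (y j))
  simpa [Sfn] using by linarith

lemma measurable_Sfn : Measurable (Sfn d) :=
  (Finset.measurable_sum _ fun i _ => (measurable_pi_apply i).pow_const 2).sub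
    ((measurable_pi_apply 0).pow_const 2)

lemma Sfn_comp_swap {i : Fin d} (hi : i ≠ 0) (h1 : (1 : Fin d) ≠ 0) (y : Fin d → ℝ) :
    Sfn d (fun k => y ((Equiv.swap (1 : Fin d) i) k)) = Sfn d y := by
  unfold Sfn
  congr 1
  · exact Equiv.sum_comp (Equiv.swap 1 i) (fun j => (y j)^2)
  · show y ((Equiv.swap (1:Fin d) i) 0) ^ 2 = y 0 ^ 2
    rw [Equiv.swap_apply_of_ne_of_ne (Ne.symm h1) (Ne.symm hi)]

end PiSide

section PiSide2

variable {d : ℕ} [NeZero d]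

lemma measurePreserving_swap (σ : Equiv.Perm (Fin d)) :
    MeasurePreserving (fun (y : Fin d → ℝ) k => y (σ.symm k)) (piG d) (piG d) := by
  have hmp := measurePreserving_piCongrLeft (fun _ : Fin d => gaussianReal 0 1) σ
  have happ : ⇑(MeasurableEquiv.piCongrLeft (fun _ : Fin d => ℝ) σ)
      = fun (y : Fin d → ℝ) k => y (σ.symm k) := by
    funext y k
    show (Equiv.piCongrLeft (fun _ : Fin d => ℝ) σ) y k = y (σ.symm k)
    conv_lhs => rw [← σ.apply_symm_apply k]
    rw [Equiv.piCongrLeft_apply_apply]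
  rw [happ] at hmp
  exact hmp

lemma integrable_ratio (hd : 2 ≤ d) {i : Fin d} (hi : i ≠ 0) :
    Integrable (fun y : Fin d → ℝ => (y i)^2 / Sfn d y) (piG d) := by
  have : IsProbabilityMeasure (piG d) := by unfold piG; infer_instance
  refine Integrable.mono' (integrable_const (1:ℝ)) ?_ (ae_of_all _ fun y => ?_)
  · exact (((measurable_pi_apply i).pow_const 2).div measurable_Sfn).aestronglyMeasurable
  · rw [Real.norm_eq_abs, abs_div, abs_of_nonneg (sq_nonneg _), abs_of_nonneg (Sfn_nonneg y)]
    rcases eq_or_lt_of_le (Sfn_nonneg y) with h | h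
    · rw [← h, div_zero]; norm_num
    · rw [div_le_one h]; exact sq_le_Sfn hd hi y

lemma integral_U (hd : 8 ≤ d) (h1 : (1 : Fin d) ≠ 0) :
    ∫ y, (y 1)^2 / Sfn d y ∂(piG d) = 1/((d:ℝ)-1) := by
  have hprob : IsProbabilityMeasure (piG d) := by unfold piG; infer_instance
  have hd2 : 2 ≤ d := by omega
  have hmeas1 : ∀ i : Fin d, Measurable (fun y : Fin d → ℝ => (y i)^2 / Sfn d y) :=
    fun i => ((measurable_pi_apply i).pow_const 2).div measurable_Sfn
  -- exchangeability
  have hexch : ∀ i : Fin d, i ≠ 0 →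
      ∫ y, (y i)^2 / Sfn d y ∂(piG d) = ∫ y, (y 1)^2 / Sfn d y ∂(piG d) := by
    intro i hi
    set σ : Equiv.Perm (Fin d) := Equiv.swap (1 : Fin d) i with hσ
    have hmp := measurePreserving_swap (d := d) σ
    have hσs : σ.symm = σ := Equiv.symm_swap 1 i
    rw [hσs] at hmp
    have step1 : ∫ y, (y 1)^2 / Sfn d y ∂(piG d)
        = ∫ y, ((fun k => y (σ k)) 1)^2 / Sfn d (fun k => y (σ k)) ∂(piG d) := by
      conv_lhs => rw [← hmp.map_eq]
      rw [integral_map hmp.measurable.aemeasurable (hmeas1 1).aestronglyMeasurable]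
    rw [step1]
    refine integral_congr_ae (ae_of_all _ fun y => ?_)
    show y i ^ 2 / Sfn d y = (fun k => y (σ k)) 1 ^ 2 / Sfn d fun k => y (σ k)
    have e1 : (fun k => y (σ k)) 1 = y i := by
      show y (σ 1) = y i
      rw [hσ, Equiv.swap_apply_left]
    rw [e1, hσ, Sfn_comp_swap hi h1]
  -- sum over i ≠ 0 is 1 a.e.
  have hae : ∀ᵐ y ∂(piG d),
      ∑ i ∈ Finset.univ.erase 0, (y i)^2 / Sfn d y = 1 := by
    have hnull : (piG d) {y : Fin d → ℝ | y 1 = 0} = 0 :=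
      Measure.pi_hyperplane (fun _ => gaussianReal 0 1) 1 0
    have hsub : {y : Fin d → ℝ | Sfn d y = 0} ⊆ {y | y 1 = 0} := by
      intro y hy
      have h2 := sq_le_Sfn hd2 h1 y
      have h3 : (y 1)^2 = 0 := le_antisymm (by rw [← Set.mem_setOf_eq.mp hy]; exact h2)
        (sq_nonneg _)
      exact sq_eq_zero_iff.mp h3
    rw [ae_iff]
    refine measure_mono_null ?_ (measure_mono_null hsub hnull)
    intro y hy
    by_contra hS
    apply hy
    have hS' : Sfn d y ≠ 0 := hS
    have hsum : ∑ i ∈ Finset.univ.erase 0, (y i)^2 = Sfn d y := by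
      have h5 := Finset.add_sum_erase Finset.univ (fun i => (y i)^2) (Finset.mem_univ (0 : Fin d))
      beta_reduce at h5
      unfold Sfn
      linarith [h5]
    show ∑ i ∈ Finset.univ.erase 0, (y i)^2 / Sfn d y = 1
    rw [← Finset.sum_div, hsum, div_self hS']
  -- combine
  have hint : ∀ i ∈ Finset.univ.erase (0 : Fin d),
      Integrable (fun y : Fin d → ℝ => (y i)^2 / Sfn d y) (piG d) :=
    fun i hi => integrable_ratio hd2 (Finset.ne_of_mem_erase hi)
  have hsum_int := integral_finset_sum (μ := piG d) (Finset.univ.erase (0 : Fin d))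
    (f := fun i y => (y i)^2 / Sfn d y) hint
  have hone : ∫ y, ∑ i ∈ Finset.univ.erase (0 : Fin d), (y i)^2 / Sfn d y ∂(piG d) = 1 := by
    rw [integral_congr_ae hae]
    simp
  have hcard : (Finset.univ.erase (0 : Fin d)).card = d - 1 := by
    rw [Finset.card_erase_of_mem (Finset.mem_univ _), Finset.card_univ, Fintype.card_fin]
  have hrhs : ∑ i ∈ Finset.univ.erase (0 : Fin d), ∫ y, (y i)^2 / Sfn d y ∂(piG d)
      = ((d:ℝ) - 1) * ∫ y, (y 1)^2 / Sfn d y ∂(piG d) := by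
    rw [Finset.sum_congr rfl (fun i hi => hexch i (Finset.ne_of_mem_erase hi)),
      Finset.sum_const, hcard, nsmul_eq_mul]
    congr 1
    rw [Nat.cast_sub (by omega), Nat.cast_one]
  have hfin : ((d:ℝ) - 1) * ∫ y, (y 1)^2 / Sfn d y ∂(piG d) = 1 := by
    rw [← hrhs, ← hsum_int, hone]
  have hdne : ((d:ℝ) - 1) ≠ 0 := by
    have : (8:ℝ) ≤ (d:ℝ) := by exact_mod_cast hd
    linarith
  field_simp at hfin ⊢
  linarith [hfin]

end PiSide2

lemma pi_side {d : ℕ} [NeZero d] (hd : 8 ≤ d) (h1 : (1 : Fin d) ≠ 0) :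
    ∫ y : Fin d → ℝ, Real.arcsin (|y 1| / Real.sqrt (Sfn d y)) ∂(piG d)
      ≤ Real.arcsin (Real.sqrt (1/((d:ℝ)-1))) := by
  have hprob : IsProbabilityMeasure (piG d) := by unfold piG; infer_instance
  have hd2 : 2 ≤ d := by omega
  set m : ℝ := 1/((d:ℝ)-1) with hm
  have hdr : (8:ℝ) ≤ (d:ℝ) := by exact_mod_cast hd
  have hm0 : 0 < m := by rw [hm]; exact div_pos one_pos (by linarith)
  have hm7 : m ≤ 1/7 := by
    rw [hm, div_le_div_iff₀ (by linarith) (by norm_num)]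
    linarith
  set c : ℝ := (2 * Real.sqrt (m * (1-m)))⁻¹ with hc
  -- pointwise facts
  have hX0 : ∀ y : Fin d → ℝ, 0 ≤ |y 1| / Real.sqrt (Sfn d y) := fun y => by positivity
  have hX1 : ∀ y : Fin d → ℝ, |y 1| / Real.sqrt (Sfn d y) ≤ 1 := by
    intro y
    rcases eq_or_lt_of_le (Sfn_nonneg y) with h | h
    · rw [← h, Real.sqrt_zero, div_zero]; norm_num
    · rw [div_le_one (Real.sqrt_pos.mpr h), ← Real.sqrt_sq_eq_abs]
      exact Real.sqrt_le_sqrt (sq_le_Sfn hd2 h1 y)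
  have hXsq : ∀ y : Fin d → ℝ, (|y 1| / Real.sqrt (Sfn d y))^2 = (y 1)^2 / Sfn d y := by
    intro y
    rw [div_pow, sq_abs, Real.sq_sqrt (Sfn_nonneg y)]
  have hpt : ∀ y : Fin d → ℝ, Real.arcsin (|y 1| / Real.sqrt (Sfn d y))
      ≤ Real.arcsin (Real.sqrt m) + ((y 1)^2 / Sfn d y - m) * c := by
    intro y
    have := arcsin_le_support_line hm0 hm7 (hX0 y) (hX1 y)
    rw [hXsq y] at this
    exact this
  -- integrability
  have hmeasX : Measurable (fun y : Fin d → ℝ => Real.arcsin (|y 1| / Real.sqrt (Sfn d y))) :=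
    Real.continuous_arcsin.measurable.comp
      (((measurable_pi_apply 1).abs).div measurable_Sfn.sqrt)
  have hint_arcsin : Integrable (fun y : Fin d → ℝ =>
      Real.arcsin (|y 1| / Real.sqrt (Sfn d y))) (piG d) := by
    refine Integrable.mono' (integrable_const (Real.pi/2)) hmeasX.aestronglyMeasurable
      (ae_of_all _ fun y => ?_)
    rw [Real.norm_eq_abs, abs_le]
    constructor
    · linarith [Real.neg_pi_div_two_le_arcsin (|y 1| / Real.sqrt (Sfn d y))]
    · exact Real.arcsin_le_pi_div_two _
  have hint_U : Integrable (fun y : Fin d → ℝ => (y 1)^2 / Sfn d y) (piG d) :=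
    integrable_ratio hd2 h1
  have hint_sub : Integrable (fun y : Fin d → ℝ => (y 1)^2 / Sfn d y - m) (piG d) := by
    exact hint_U.sub (integrable_const m)
  have hint_g : Integrable (fun y : Fin d → ℝ => ((y 1)^2 / Sfn d y - m) * c) (piG d) := by
    exact hint_sub.mul_const c
  have hint_rhs : Integrable (fun y : Fin d → ℝ =>
      Real.arcsin (Real.sqrt m) + ((y 1)^2 / Sfn d y - m) * c) (piG d) := by
    exact (integrable_const _).add hint_g
  -- combine
  calc ∫ y, Real.arcsin (|y 1| / Real.sqrt (Sfn d y)) ∂(piG d)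
      ≤ ∫ y, (Real.arcsin (Real.sqrt m) + ((y 1)^2 / Sfn d y - m) * c) ∂(piG d) :=
        integral_mono hint_arcsin hint_rhs hpt
    _ = Real.arcsin (Real.sqrt m)
        + ((∫ y, (y 1)^2 / Sfn d y ∂(piG d)) - m) * c := by
        rw [integral_add (integrable_const _) hint_g, integral_const, integral_mul_const,
          integral_sub hint_U (integrable_const m), integral_const]
        simp
    _ = Real.arcsin (Real.sqrt m) := by
        rw [integral_U hd h1, ← hm]
        simp

end Aux

/-- The bound `E[θ_P] ≤ arccos √(1 − 1/(d−1))` from the proof of Theorem 1: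
for `n ~ N(0, I)` in `ℝ^d` with `d ≥ 8`, `Q` the orthogonal projection onto the
hyperplane orthogonal to a nonzero vector `v`, and `w` a unit vector orthogonal
to `v`, `E[arcsin (|⟪Q n, w⟫|/‖Q n‖)] ≤ arccos √(1 − 1/(d−1))`. -/
theorem expected_arcsin_abs_inner_proj_le {d : ℕ} (hd : 8 ≤ d)
    (v : EuclideanSpace ℝ (Fin d)) (hv : v ≠ 0)
    (w : EuclideanSpace ℝ (Fin d)) (hw : ‖w‖ = 1) (hwv : ⟪w, v⟫ = 0) :
    ∫ n, Real.arcsin (|⟪n - (⟪v, n⟫ / ‖v‖ ^ 2) • v, w⟫|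
        / ‖n - (⟪v, n⟫ / ‖v‖ ^ 2) • v‖) ∂(stdGaussian d)
      ≤ Real.arccos (Real.sqrt (1 - 1 / ((d : ℝ) - 1))) := by
  haveI : NeZero d := ⟨by omega⟩
  have h10 : (1 : Fin d) ≠ 0 := by
    intro h
    rw [Fin.one_eq_zero_iff] at h
    omega
  have hv0 : ‖v‖ ≠ 0 := norm_ne_zero_iff.mpr hv
  -- basic numeric facts about m
  set m : ℝ := 1/((d:ℝ)-1) with hm
  have hdr : (8:ℝ) ≤ (d:ℝ) := by exact_mod_cast hd
  have hm0 : 0 < m := by rw [hm]; exact div_pos one_pos (by linarith)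
  -- orthonormal extension
  set u : Fin d → EuclideanSpace ℝ (Fin d) := fun i => if i = 0 then ‖v‖⁻¹ • v else w with hu
  have hvhat : ‖(‖v‖⁻¹ • v : EuclideanSpace ℝ (Fin d))‖ = 1 := by
    rw [norm_smul, norm_inv, norm_norm, inv_mul_cancel₀ hv0]
  have hvw : ⟪(‖v‖⁻¹ • v : EuclideanSpace ℝ (Fin d)), w⟫ = 0 := by
    rw [real_inner_smul_left, real_inner_comm, hwv, mul_zero]
  have hortho : Orthonormal ℝ (({0, 1} : Set (Fin d)).restrict u) := by
    constructor
    · rintro ⟨i, hi⟩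
      show ‖u i‖ = 1
      rcases hi with rfl | hi
      · simp only [hu, if_pos rfl]
        exact hvhat
      · rcases hi with rfl
        simp only [hu, if_neg h10]
        exact hw
    · rintro ⟨i, hi⟩ ⟨j, hj⟩ hij
      show ⟪u i, u j⟫ = 0
      have hne : i ≠ j := fun h => hij (Subtype.ext h)
      rcases hi with rfl | hi <;> [skip; rcases hi with rfl] <;>
        (rcases hj with rfl | hj <;> [skip; rcases hj with rfl])
      · exact absurd rfl hne
      · simp only [hu, if_pos rfl, if_neg h10]
        exact hvw
      · simp only [hu, if_pos rfl, if_neg h10]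
        rw [real_inner_comm]
        exact hvw
      · exact absurd rfl hne
  obtain ⟨b, hb⟩ := hortho.exists_orthonormalBasis_extension_of_card_eq
    (by simp [finrank_euclideanSpace])
  have hb0 : b 0 = ‖v‖⁻¹ • v := by
    rw [hb 0 (by simp)]
    simp [hu]
  have hb1 : b 1 = w := by
    rw [hb 1 (by simp)]
    simp [hu, h10]
  have hveq : v = ‖v‖ • b 0 := by
    rw [hb0, smul_smul, mul_inv_cancel₀ hv0, one_smul]
  -- pointwise identification in coordinates
  have hpoint : ∀ y : Fin d → ℝ,
      Real.arcsin (|⟪(b.repr.symm ((MeasurableEquiv.toLp 2 (Fin d → ℝ)) y))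
            - (⟪v, b.repr.symm ((MeasurableEquiv.toLp 2 (Fin d → ℝ)) y)⟫ / ‖v‖ ^ 2) • v, w⟫|
          / ‖(b.repr.symm ((MeasurableEquiv.toLp 2 (Fin d → ℝ)) y))
            - (⟪v, b.repr.symm ((MeasurableEquiv.toLp 2 (Fin d → ℝ)) y)⟫ / ‖v‖ ^ 2) • v‖)
        = Real.arcsin (|y 1| / Real.sqrt (Sfn d y)) := by
    intro y
    set x : EuclideanSpace ℝ (Fin d) := (MeasurableEquiv.toLp 2 (Fin d → ℝ)) y with hx
    set n : EuclideanSpace ℝ (Fin d) := b.repr.symm x with hn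
    have hrepr : b.repr n = x := b.repr.apply_symm_apply x
    have hip : ∀ i, ⟪b i, n⟫ = y i := by
      intro i
      rw [← b.repr_apply_apply, hrepr]
      rfl
    have hvn : ⟪v, n⟫ = ‖v‖ * y 0 := by
      conv_lhs => rw [hveq]
      rw [real_inner_smul_left, hip 0]
    have hQ : n - (⟪v, n⟫ / ‖v‖ ^ 2) • v = n - (y 0) • b 0 := by
      congr 1
      rw [hvn, hb0, smul_smul]
      congr 1
      have h2 : ‖v‖ ≠ 0 := hv0
      field_simp
    have hnum : ⟪n - (y 0) • b 0, w⟫ = y 1 := by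
      rw [inner_sub_left, real_inner_smul_left, ← hb1]
      rw [show (inner ℝ n (b 1) : ℝ) = y 1 from by rw [real_inner_comm]; exact hip 1]
      have hb01 : ⟪b 0, b 1⟫ = 0 := b.orthonormal.2 (Ne.symm h10)
      rw [hb01, mul_zero, sub_zero]
    have hden : ‖n - (y 0) • b 0‖ = Real.sqrt (Sfn d y) := by
      have hnn : ‖n‖^2 = ∑ i, (y i)^2 := by
        rw [show ‖n‖ = ‖x‖ from b.repr.symm.norm_map x, EuclideanSpace.norm_eq,
          Real.sq_sqrt (by positivity)]
        refine Finset.sum_congr rfl fun i _ => ?_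
        rw [Real.norm_eq_abs, sq_abs]
        rfl
      have hcross : ⟪n, (y 0) • b 0⟫ = y 0 * y 0 := by
        rw [real_inner_smul_right, real_inner_comm, hip 0]
      have hb0n : ‖b 0‖ = 1 := b.orthonormal.1 0
      have hnsq : ‖n - (y 0) • b 0‖^2 = Sfn d y := by
        rw [norm_sub_sq_real, hcross, hnn, norm_smul, hb0n, mul_one]
        unfold Sfn
        rw [Real.norm_eq_abs, sq_abs]
        ring
      rw [← hnsq, Real.sqrt_sq (norm_nonneg _)]
    rw [hQ, hnum, hden]
  -- change of variables
  have hchain : ∫ n, Real.arcsin (|⟪n - (⟪v, n⟫ / ‖v‖ ^ 2) • v, w⟫|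
        / ‖n - (⟪v, n⟫ / ‖v‖ ^ 2) • v‖) ∂(stdGaussian d)
      = ∫ y, Real.arcsin (|y 1| / Real.sqrt (Sfn d y)) ∂(piG d) := by
    conv_lhs => rw [← stdGaussian_map_isometry b.repr.symm]
    rw [show ⇑(b.repr.symm) = ⇑((b.repr.symm).toHomeomorph.toMeasurableEquiv) from rfl,
      integral_map_equiv, _root_.stdGaussian, integral_map_equiv]
    exact integral_congr_ae (ae_of_all _ fun y => hpoint y)
  rw [hchain]
  -- final arccos/arcsin identification
  have hm1 : m < 1 := by
    rw [hm]
    rw [div_lt_one (by linarith)]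
    linarith
  have harc : Real.arccos (Real.sqrt (1 - m)) = Real.arcsin (Real.sqrt m) := by
    have h1 : Real.sqrt (1 - m) = Real.cos (Real.arcsin (Real.sqrt m)) := by
      rw [Real.cos_arcsin, Real.sq_sqrt hm0.le]
    rw [h1, Real.arccos_cos (Real.arcsin_nonneg.mpr (Real.sqrt_nonneg _))
      (le_trans (Real.arcsin_le_pi_div_two _) (by linarith [Real.pi_pos]))]
  rw [show (1 : ℝ) - 1 / ((d:ℝ) - 1) = 1 - m from by rw [hm], harc]
  exact pi_side hd h10
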